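/- Let m and l be natural numbers, and let Λ be a set of nonnegative real numbers satisfying DCC such that a ≤ l for every a ∈ Λ. Then the set {⟨ma⟩ | a ∈ Λ} of fractional parts also satisfies DCC. (Lemma 2.1(4).) -/

import Mathlib

/-- A set of real numbers satisfies DCC if it contains no infinite strictly
decreasing sequence. -/
def SatisfiesDCC (S : Set ℝ) : Prop :=
  ¬ ∃ f : ℕ → ℝ, (∀ n, f n ∈ S) ∧ StrictAnti f

theorem dcc_fract (m l : ℕ) (Λ : Set ℝ) (h0 : ∀ a ∈ Λ, 0 ≤ a)
    (hl : ∀ a ∈ Λ, a ≤ (l : ℝ)) (hΛ : SatisfiesDCC Λ) :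
    SatisfiesDCC {x : ℝ | ∃ a ∈ Λ, x = Int.fract ((m : ℝ) * a)} := by
  rintro ⟨f, hf, hanti⟩
  choose a ha hfa using hf
  rcases Nat.eq_zero_or_pos m with rfl | hm
  · have h01 : f 1 < f 0 := hanti (by norm_num)
    simp [hfa] at h01
  -- the floor of m * a n lies in a finite set
  have hmem : ∀ n, ⌊(m : ℝ) * a n⌋ ∈ Finset.Icc (0 : ℤ) (m * l) := by
    intro n
    simp only [Finset.mem_Icc]
    constructor
    · exact Int.floor_nonneg.2 (mul_nonneg (by positivity) (h0 _ (ha n)))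
    · have : (m : ℝ) * a n ≤ (m : ℝ) * l :=
        mul_le_mul_of_nonneg_left (hl _ (ha n)) (by positivity)
      calc ⌊(m : ℝ) * a n⌋ ≤ ⌊((m * l : ℕ) : ℝ)⌋ := by
            apply Int.floor_le_floor; push_cast; exact this
        _ = (m * l : ℕ) := Int.floor_natCast _
  have : ∃ k : Finset.Icc (0 : ℤ) (m * l),
      ((fun n => (⟨⌊(m : ℝ) * a n⌋, hmem n⟩ : Finset.Icc (0 : ℤ) (m * l))) ⁻¹' {k}).Infinite := by
    by_contra h
    push_neg at h
    have : (Set.univ : Set ℕ).Finite := by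
      have := Set.Finite.biUnion (Set.finite_univ (α := Finset.Icc (0 : ℤ) (m * l)))
        (fun k _ => h k)
      refine this.subset fun n _ => ?_
      exact Set.mem_biUnion (Set.mem_univ _) rfl
    exact Set.infinite_univ this
  obtain ⟨⟨k, hk⟩, hinf⟩ := this
  -- enumerate the fiber by a strict mono function
  set s : Set ℕ := _
  have hmono : StrictMono (Nat.nth (· ∈ s)) := Nat.nth_strictMono hinf
  have hmemf : ∀ n, Nat.nth (· ∈ s) n ∈ s := Nat.nth_mem_of_infinite hinf
  set g := Nat.nth (· ∈ s) with hg
  have hfloor : ∀ n, ⌊(m : ℝ) * a (g n)⌋ = k := by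
    intro n
    have h := hmemf n
    have : (⟨⌊(m : ℝ) * a (g n)⌋, hmem (g n)⟩ : Finset.Icc (0 : ℤ) (m * l)) = ⟨k, hk⟩ := h
    exact Subtype.ext_iff.1 this
  refine hΛ ⟨fun n => a (g n), fun n => ha _, ?_⟩
  intro i j hij
  have h1 : (m : ℝ) * a (g j) < (m : ℝ) * a (g i) := by
    have hfi : (m : ℝ) * a (g i) = k + f (g i) := by
      rw [hfa]
      have := Int.floor_add_fract ((m : ℝ) * a (g i))
      rw [hfloor] at this; linarith
    have hfj : (m : ℝ) * a (g j) = k + f (g j) := by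
      rw [hfa]
      have := Int.floor_add_fract ((m : ℝ) * a (g j))
      rw [hfloor] at this; linarith
    rw [hfi, hfj]
    have := hanti (hmono hij)
    linarith
  have hm' : (0 : ℝ) < m := by positivity
  exact lt_of_mul_lt_mul_left h1 (le_of_lt hm')
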